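/- For every integer p ≥ 3 and every fixed β > β*(p), the set of all β_0 > β*(p) for which sup_{x ∈ η_p^{−1}((β,∞))} H_{β_0,p}(x) > sup_{x ∈ (m_*(β,p), 1]} H_{β_0,p}(x) (equivalently, for which the maximum pseudolikelihood test is strictly less Bahadur efficient than the maximum likelihood test) is exactly the open interval (β*(p), I(m_*(β,p)) / m_*(β,p)^p). -/

import Mathlib

open Real Set Filter Topology

/-- `I(x) = ½[(1+x)log(1+x) + (1−x)log(1−x)]` (with `Real.log 0 = 0`). -/
noncomputable def bahI (x : ℝ) : ℝ :=
  ((1 + x) * Real.log (1 + x) + (1 - x) * Real.log (1 - x)) / 2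

/-- `H_{β,p}(x) = β xᵖ − I(x)`. -/
noncomputable def bahH (β : ℝ) (p : ℕ) (x : ℝ) : ℝ := β * x ^ p - bahI x

/-- `β*(p) = sup {β ≥ 0 : sup_{x∈[−1,1]} H_{β,p}(x) = 0}`. -/
noncomputable def betaStar (p : ℕ) : ℝ :=
  sSup {β : ℝ | 0 ≤ β ∧ sSup (bahH β p '' Set.Icc (-1 : ℝ) 1) = 0}

/-- inverse hyperbolic tangent. -/
noncomputable def arctanh (x : ℝ) : ℝ := Real.log ((1 + x) / (1 - x)) / 2

/-- `η_p(t) = p⁻¹ t^{1−p} arctanh t` for `t ≠ 0`, and `η_p(0) = 0`. -/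
noncomputable def etaFn (p : ℕ) (t : ℝ) : ℝ :=
  if t = 0 then 0 else (p : ℝ)⁻¹ * t ^ (1 - (p : ℤ)) * arctanh t


lemma arctanh_eq {x : ℝ} (h1 : -1 < x) (h2 : x < 1) :
    arctanh x = (Real.log (1 + x) - Real.log (1 - x)) / 2 := by
  unfold arctanh; rw [Real.log_div (by linarith) (by linarith)]

lemma arctanh_zero : arctanh 0 = 0 := by simp [arctanh]

lemma arctanh_one : arctanh 1 = 0 := by norm_num [arctanh]

lemma arctanh_neg_one : arctanh (-1) = 0 := by norm_num [arctanh]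

lemma arctanh_neg (x : ℝ) : arctanh (-x) = - arctanh x := by
  unfold arctanh
  rw [show (1 + -x) = 1 - x by ring, show (1 - -x) = 1 + x by ring,
    show (1 - x) / (1 + x) = ((1 + x) / (1 - x))⁻¹ from (inv_div _ _).symm, Real.log_inv]
  ring

lemma hasDerivAt_arctanh {x : ℝ} (h1 : -1 < x) (h2 : x < 1) :
    HasDerivAt arctanh (1 / (1 - x ^ 2)) x := by
  have hd : HasDerivAt (fun y : ℝ => (Real.log (1 + y) - Real.log (1 - y)) / 2)
      (1 / (1 - x ^ 2)) x := by
    have d1 : HasDerivAt (fun y : ℝ => Real.log (1 + y)) (1 / (1 + x)) x := by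
      have h : HasDerivAt (fun y : ℝ => 1 + y) 1 x := (hasDerivAt_id x).const_add 1
      simpa using h.log (by linarith)
    have d2 : HasDerivAt (fun y : ℝ => Real.log (1 - y)) (-(1 / (1 - x))) x := by
      have h : HasDerivAt (fun y : ℝ => 1 - y) (-1) x := (hasDerivAt_id x).const_sub 1
      have := h.log (by linarith : (1:ℝ) - x ≠ 0)
      convert this using 1
      field_simp
    have := (d1.sub d2).div_const 2
    refine this.congr_deriv ?_
    have hx1 : (1:ℝ) + x ≠ 0 := by linarith
    have hx2 : (1:ℝ) - x ≠ 0 := by linarith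
    have hx3 : (1:ℝ) - x ^ 2 ≠ 0 := by nlinarith
    field_simp
    ring
  apply hd.congr_of_eventuallyEq
  exact Filter.eventuallyEq_of_mem (Ioo_mem_nhds h1 h2) (fun y hy => arctanh_eq hy.1 hy.2)

lemma arctanh_strictMonoOn : StrictMonoOn arctanh (Ioo (-1 : ℝ) 1) := by
  apply strictMonoOn_of_deriv_pos (convex_Ioo _ _)
  · exact fun x hx => (hasDerivAt_arctanh hx.1 hx.2).continuousAt.continuousWithinAt
  · intro x hx
    rw [interior_Ioo] at hx
    rw [(hasDerivAt_arctanh hx.1 hx.2).deriv]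
    have : 0 < 1 - x ^ 2 := by nlinarith [hx.1, hx.2]
    positivity

lemma self_lt_arctanh {x : ℝ} (h0 : 0 < x) (h1 : x < 1) : x < arctanh x := by
  have key : StrictMonoOn (fun y => arctanh y - y) (Icc 0 x) := by
    apply strictMonoOn_of_deriv_pos (convex_Icc _ _)
    · intro y hy
      have hy1 : (-1:ℝ) < y := by linarith [hy.1]
      have hy2 : y < 1 := by linarith [hy.2]
      exact ((hasDerivAt_arctanh hy1 hy2).sub (hasDerivAt_id' (𝕜 := ℝ) (x := y))).continuousAt.continuousWithinAt
    · intro y hy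
      rw [interior_Icc] at hy
      have hy1 : (-1:ℝ) < y := by linarith [hy.1]
      have hy2 : y < 1 := by linarith [hy.2]
      rw [HasDerivAt.deriv (f := fun y => arctanh y - y) ((hasDerivAt_arctanh hy1 hy2).sub (hasDerivAt_id' (𝕜 := ℝ) (x := y)))]
      have hsq : 0 < 1 - y ^ 2 := by nlinarith
      have h1' : 1 < 1 / (1 - y ^ 2) := by
        rw [lt_div_iff₀ hsq]; nlinarith [hy.1]
      simpa using h1'
  have h := key (left_mem_Icc.2 h0.le) (right_mem_Icc.2 h0.le) h0
  simp only [arctanh_zero] at h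
  linarith

lemma continuous_bahI : Continuous bahI := by
  unfold bahI
  have h := Real.continuous_mul_log
  have c1 : Continuous fun x : ℝ => (1 + x) * Real.log (1 + x) :=
    h.comp (continuous_const.add continuous_id)
  have c2 : Continuous fun x : ℝ => (1 - x) * Real.log (1 - x) :=
    h.comp (continuous_const.sub continuous_id)
  exact (c1.add c2).div_const 2

lemma continuous_bahH (β₀ : ℝ) (p : ℕ) : Continuous (bahH β₀ p) := by
  unfold bahH
  exact (continuous_const.mul (continuous_pow p)).sub continuous_bahI

lemma bahH_zero (β₀ : ℝ) (p : ℕ) (hp : 1 ≤ p) : bahH β₀ p 0 = 0 := by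
  simp [bahH, bahI, zero_pow (by omega : p ≠ 0)]

lemma hasDerivAt_bahI {x : ℝ} (h1 : -1 < x) (h2 : x < 1) : HasDerivAt bahI (arctanh x) x := by
  rw [arctanh_eq h1 h2]
  have hx1 : (1:ℝ) + x ≠ 0 := by linarith
  have hx2 : (1:ℝ) - x ≠ 0 := by linarith
  have d1 : HasDerivAt (fun y : ℝ => (1 + y) * Real.log (1 + y)) (Real.log (1 + x) + 1) x := by
    have ha : HasDerivAt (fun y : ℝ => 1 + y) 1 x := (hasDerivAt_id x).const_add 1
    have hl : HasDerivAt (fun y : ℝ => Real.log (1 + y)) (1 / (1 + x)) x := by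
      simpa using ha.log hx1
    have := ha.mul hl
    refine this.congr_deriv ?_
    field_simp
  have d2 : HasDerivAt (fun y : ℝ => (1 - y) * Real.log (1 - y)) (-Real.log (1 - x) - 1) x := by
    have ha : HasDerivAt (fun y : ℝ => 1 - y) (-1) x := (hasDerivAt_id x).const_sub 1
    have hl : HasDerivAt (fun y : ℝ => Real.log (1 - y)) (-(1 / (1 - x))) x := by
      have := ha.log hx2
      convert this using 1
      field_simp
    have := ha.mul hl
    refine this.congr_deriv ?_
    field_simp
    ring
  have := (d1.add d2).div_const 2
  have heq : (Real.log (1 + x) + 1 + (-Real.log (1 - x) - 1)) / 2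
      = (Real.log (1 + x) - Real.log (1 - x)) / 2 := by ring
  rw [heq] at this
  exact this

lemma hasDerivAt_bahH (β₀ : ℝ) (p : ℕ) {x : ℝ} (h1 : -1 < x) (h2 : x < 1) :
    HasDerivAt (bahH β₀ p) (β₀ * p * x ^ (p - 1) - arctanh x) x := by
  unfold bahH
  have h := ((hasDerivAt_pow p x).const_mul β₀).sub (hasDerivAt_bahI h1 h2)
  refine h.congr_deriv ?_
  ring


noncomputable def hfun (x : ℝ) : ℝ := (1 - x ^ 2) * arctanh x / x

lemma hasDerivAt_hfun {x : ℝ} (hx0 : 0 < x) (hx1 : x < 1) :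
    HasDerivAt hfun ((x - (1 + x ^ 2) * arctanh x) / x ^ 2) x := by
  have hsq : 0 < 1 - x ^ 2 := by nlinarith
  have hsqne : (1:ℝ) - x ^ 2 ≠ 0 := ne_of_gt hsq
  have hat := hasDerivAt_arctanh (by linarith) hx1
  have hq : HasDerivAt (fun y : ℝ => 1 - y ^ 2) (-(2 * x)) x := by
    simpa using (hasDerivAt_pow 2 x).const_sub 1
  have h1 := hq.mul hat
  have h2 := h1.div (hasDerivAt_id x) (ne_of_gt hx0)
  have : HasDerivAt (fun y : ℝ => (1 - y ^ 2) * arctanh y / y)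
      ((x - (1 + x ^ 2) * arctanh x) / x ^ 2) x := by
    refine h2.congr_deriv ?_
    rw [id_eq, Pi.mul_apply]
    field_simp
    ring
  exact this

lemma hfun_strictAntiOn : StrictAntiOn hfun (Ioo (0:ℝ) 1) := by
  apply strictAntiOn_of_deriv_neg (convex_Ioo _ _)
  · exact fun x hx => (hasDerivAt_hfun hx.1 hx.2).continuousAt.continuousWithinAt
  · intro x hx
    rw [interior_Ioo] at hx
    rw [(hasDerivAt_hfun hx.1 hx.2).deriv]
    apply div_neg_of_neg_of_pos
    · have h3 : x < arctanh x := self_lt_arctanh hx.1 hx.2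
      nlinarith [sq_nonneg x, hx.1]
    · exact pow_pos hx.1 2

lemma exists_left_gt {f : ℝ → ℝ} {c v : ℝ} (hd : HasDerivAt f v c) (hv : v < 0)
    {a : ℝ} (ha : a < c) : ∃ x, a < x ∧ x < c ∧ f c < f x := by
  have hslope := hasDerivAt_iff_tendsto_slope.1 hd
  have h1 : ∀ᶠ x in 𝓝[≠] c, slope f c x < 0 := hslope.eventually (eventually_lt_nhds hv)
  have h2 : ∀ᶠ x in 𝓝[<] c, slope f c x < 0 :=
    h1.filter_mono (nhdsWithin_mono c fun x hx => ne_of_lt hx)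
  have h3 : Ioo a c ∈ 𝓝[<] c := Ioo_mem_nhdsLT_of_mem ⟨ha, le_refl c⟩
  obtain ⟨x, hx1, hx2⟩ := (h2.and (eventually_of_mem h3 fun x hx => hx)).exists
  refine ⟨x, hx2.1, hx2.2, ?_⟩
  have hs : slope f c x = (f x - f c) / (x - c) := slope_def_field f c x
  rw [hs] at hx1
  have hxc : x - c < 0 := by linarith [hx2.2]
  rcases div_neg_iff.1 hx1 with ⟨h, h'⟩ | ⟨h, h'⟩
  · linarith
  · linarith

lemma not_isLocalMax_of_second_deriv_pos {f f' : ℝ → ℝ} {c q : ℝ}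
    (hd : ∀ᶠ x in 𝓝 c, HasDerivAt f (f' x) x)
    (h0 : f' c = 0) (h2 : HasDerivAt f' q c) (hq : 0 < q) :
    ¬ IsLocalMax f c := by
  intro hmax
  have hslope := hasDerivAt_iff_tendsto_slope.1 h2
  have h1 : ∀ᶠ x in 𝓝[≠] c, 0 < slope f' c x := hslope.eventually (eventually_gt_nhds hq)
  have hev : ∀ᶠ x in 𝓝[>] c, 0 < f' x := by
    filter_upwards [h1.filter_mono (nhdsWithin_mono c fun x hx => ne_of_gt hx),
      self_mem_nhdsWithin] with x hx hx'
    rw [slope_def_field, h0, sub_zero] at hx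
    have : 0 < x - c := by simp only [mem_Ioi] at hx'; linarith
    rcases div_pos_iff.1 hx with ⟨h, h'⟩ | ⟨h, h'⟩
    · linarith
    · linarith
  have hd' : ∀ᶠ x in 𝓝[>] c, HasDerivAt f (f' x) x := hd.filter_mono nhdsWithin_le_nhds
  -- extract an interval
  obtain ⟨u, hu⟩ : ∃ u ∈ 𝓝[>] c, ∀ x ∈ u, 0 < f' x ∧ HasDerivAt f (f' x) x := by
    obtain ⟨u, hu1, hu2⟩ := (hev.and hd').exists_mem
    exact ⟨u, hu1, hu2⟩
  obtain ⟨ε, hε, hball⟩ := Metric.mem_nhdsWithin_iff.1 hu.1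
  set b := c + ε / 2 with hb
  have hcb : c < b := by simp [hb]; linarith
  have hsub : Ioc c b ⊆ u := by
    intro x hx
    apply hball
    constructor
    · rw [Metric.mem_ball, Real.dist_eq, abs_of_pos (by linarith [hx.1])]
      have := hx.2
      simp only [hb] at this ⊢
      linarith
    · exact hx.1
  have hmono : StrictMonoOn f (Icc c b) := by
    apply strictMonoOn_of_deriv_pos (convex_Icc _ _)
    · intro x hx
      rcases eq_or_lt_of_le hx.1 with rfl | hlt
      · exact (hd.self_of_nhds).continuousAt.continuousWithinAt
      · exact ((hu.2 x (hsub ⟨hlt, hx.2⟩)).2).continuousAt.continuousWithinAt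
    · intro x hx
      rw [interior_Icc] at hx
      have h := hu.2 x (hsub ⟨hx.1, hx.2.le⟩)
      rw [h.2.deriv]
      exact h.1
  have hev2 : ∀ᶠ x in 𝓝[>] c, f x ≤ f c := hmax.filter_mono nhdsWithin_le_nhds
  have hev3 : Ioc c b ∈ 𝓝[>] c := Ioc_mem_nhdsGT_of_mem ⟨le_refl c, hcb⟩
  obtain ⟨x, hx1, hx2⟩ := (hev2.and (eventually_of_mem hev3 fun x hx => hx)).exists
  have := hmono (left_mem_Icc.2 hcb.le) ⟨hx2.1.le, hx2.2⟩ hx2.1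
  linarith

lemma not_isLocalMin_of_second_deriv_neg {f f' : ℝ → ℝ} {c q : ℝ}
    (hd : ∀ᶠ x in 𝓝 c, HasDerivAt f (f' x) x)
    (h0 : f' c = 0) (h2 : HasDerivAt f' q c) (hq : q < 0) :
    ¬ IsLocalMin f c := by
  intro hmin
  have := not_isLocalMax_of_second_deriv_pos (f := fun x => -f x) (f' := fun x => -f' x)
    (hd.mono fun x h => h.neg) (by simp [h0]) h2.neg (by linarith)
  exact this (by simpa using hmin.neg)

lemma eta_at_zero (p : ℕ) : etaFn p 0 = 0 := by simp [etaFn]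

lemma eta_at_one (p : ℕ) : etaFn p 1 = 0 := by simp [etaFn, arctanh_one]

lemma eta_at_neg_one (p : ℕ) : etaFn p (-1) = 0 := by simp [etaFn, arctanh_neg_one]

lemma zpow_eq_inv_pow {t : ℝ} (ht : t ≠ 0) (p : ℕ) (hp : 1 ≤ p) :
    t ^ (1 - (p : ℤ)) = (t ^ (p - 1))⁻¹ := by
  have : (1 - (p : ℤ)) = -(((p - 1 : ℕ) : ℤ)) := by
    push_cast [Nat.cast_sub hp]
    ring
  rw [this, zpow_neg, zpow_natCast]

lemma eta_gt_iff {p : ℕ} (hp : 1 ≤ p) {β t : ℝ} (ht : 0 < t) :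
    β < etaFn p t ↔ β * p * t ^ (p - 1) < arctanh t := by
  have hp0 : (0:ℝ) < p := by exact_mod_cast hp
  have htp : 0 < t ^ (p - 1) := pow_pos ht _
  unfold etaFn
  rw [if_neg (ne_of_gt ht), zpow_eq_inv_pow (ne_of_gt ht) p hp]
  rw [show (p : ℝ)⁻¹ * (t ^ (p - 1))⁻¹ * arctanh t = arctanh t / (p * t ^ (p - 1)) by
    rw [div_eq_mul_inv, mul_inv]; ring]
  rw [lt_div_iff₀ (by positivity)]
  constructor <;> intro h <;> nlinarith

lemma eta_gt_of_small {p : ℕ} (hp : 3 ≤ p) {β t : ℝ} (hβ : 0 < β)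
    (ht0 : 0 < t) (hts : t < 1 / (β * p + 1)) : β < etaFn p t := by
  have hp0 : (0:ℝ) < p := by positivity
  have hd : (0:ℝ) < β * p + 1 := by positivity
  have ht1 : t < 1 := by
    have : 1 / (β * p + 1) ≤ 1 := by
      rw [div_le_one hd]; nlinarith
    linarith
  rw [eta_gt_iff (by omega) ht0]
  have harc : t < arctanh t := self_lt_arctanh ht0 ht1
  have h1 : t ^ (p - 3) ≤ 1 := pow_le_one₀ ht0.le ht1.le
  have h2 : t ^ (p - 1) = t ^ (p - 3) * t ^ 2 := by
    rw [← pow_add]; congr 1; omega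
  have h3 : β * p * t < 1 := by
    have := (mul_lt_mul_of_pos_left hts (by positivity : (0:ℝ) < β * p))
    rw [mul_one_div] at this
    have h4 : β * p / (β * p + 1) < 1 := by
      rw [div_lt_one hd]; linarith
    linarith
  calc β * ↑p * t ^ (p - 1) = (β * ↑p * t) * (t ^ (p - 3) * t) := by rw [h2]; ring
    _ ≤ 1 * (t ^ (p - 3) * t) := by
        apply mul_le_mul_of_nonneg_right h3.le
        positivity
    _ = t ^ (p - 3) * t := one_mul _
    _ ≤ 1 * t := by apply mul_le_mul_of_nonneg_right h1 ht0.le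
    _ = t := one_mul _
    _ < arctanh t := harc

lemma eta_nonpos_of_odd {p : ℕ} (hodd : Odd p) {t : ℝ} (h1 : -1 ≤ t) (h2 : t < 0) :
    etaFn p t ≤ 0 := by
  rcases eq_or_lt_of_le h1 with rfl | h1'
  · rw [eta_at_neg_one]
  · unfold etaFn
    rw [if_neg (ne_of_lt h2)]
    have heven : Even (1 - (p : ℤ)) := by
      obtain ⟨k, hk⟩ := hodd
      exact ⟨-k, by push_cast [hk]; ring⟩
    have hzpos : 0 < t ^ (1 - (p : ℤ)) := heven.zpow_pos (ne_of_lt h2)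
    have harc : arctanh t < 0 := by
      have h0 : 0 < -t := by linarith
      have hlt : -t < 1 := by linarith
      have := self_lt_arctanh h0 hlt
      rw [show t = -(-t) by ring, arctanh_neg]
      linarith
    have hpn : 0 < p := hodd.pos
    have hppos : (0:ℝ) < (p : ℝ)⁻¹ := by
      have : (0:ℝ) < p := by exact_mod_cast hpn
      positivity
    exact le_of_lt (mul_neg_of_pos_of_neg (mul_pos hppos hzpos) harc)

lemma eta_neg_even {p : ℕ} (hp : 1 ≤ p) (heven : Even p) (x : ℝ) :
    etaFn p (-x) = etaFn p x := by
  rcases eq_or_ne x 0 with rfl | hx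
  · simp
  · unfold etaFn
    rw [if_neg (neg_ne_zero.2 hx), if_neg hx]
    have hodd : Odd (1 - (p : ℤ)) := by
      obtain ⟨k, hk⟩ := heven
      exact ⟨-k, by push_cast [hk]; ring⟩
    rw [hodd.neg_zpow, arctanh_neg]
    ring

lemma bahH_neg_even {p : ℕ} (heven : Even p) (β₀ x : ℝ) :
    bahH β₀ p (-x) = bahH β₀ p x := by
  unfold bahH bahI
  rw [heven.neg_pow, show (1 : ℝ) + -x = 1 - x by ring, show (1 : ℝ) - -x = 1 + x by ring]
  ring

-- second derivative of ψ' for bahH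
lemma hasDerivAt_psi' (β : ℝ) (p : ℕ) (hp : 3 ≤ p) {x : ℝ} (h1 : -1 < x) (h2 : x < 1) :
    HasDerivAt (fun y => β * p * y ^ (p - 1) - arctanh y)
      (β * p * ((p - 1 : ℕ) * x ^ (p - 2)) - 1 / (1 - x ^ 2)) x := by
  have hpow : HasDerivAt (fun y : ℝ => β * ↑p * y ^ (p - 1))
      (β * ↑p * ((p - 1 : ℕ) * x ^ (p - 1 - 1))) x := (hasDerivAt_pow (p - 1) x).const_mul _
  have : p - 1 - 1 = p - 2 := by omega
  rw [this] at hpow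
  exact hpow.sub (hasDerivAt_arctanh h1 h2)

/-- At an interior critical point of `bahH β p` that is a local max, `(p-1)·hfun ≤ 1`. -/
lemma crit_localmax_ineq (β : ℝ) (p : ℕ) (hp : 3 ≤ p) {r : ℝ} (hr0 : 0 < r) (hr1 : r < 1)
    (hβ : 0 < β)
    (hcrit : β * p * r ^ (p - 1) = arctanh r) (hloc : IsLocalMax (bahH β p) r) :
    ((p : ℝ) - 1) * hfun r ≤ 1 := by
  by_contra hgt
  push_neg at hgt
  have hsq : 0 < 1 - r ^ 2 := by nlinarith
  have hd : ∀ᶠ x in 𝓝 r, HasDerivAt (bahH β p)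
      ((fun y => β * p * y ^ (p - 1) - arctanh y) x) x :=
    eventually_of_mem (Ioo_mem_nhds (by linarith) hr1)
      (fun x hx => hasDerivAt_bahH β p hx.1 hx.2)
  have h0 : β * p * r ^ (p - 1) - arctanh r = 0 := by rw [hcrit]; ring
  have h2 := hasDerivAt_psi' β p hp (by linarith : (-1:ℝ) < r) hr1
  have hq : 0 < β * p * ((p - 1 : ℕ) * r ^ (p - 2)) - 1 / (1 - r ^ 2) := by
    have hk : ((p - 1 : ℕ) : ℝ) = (p : ℝ) - 1 := by
      push_cast [Nat.cast_sub (by omega : 1 ≤ p)]; ring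
    rw [hk, sub_pos, div_lt_iff₀ hsq, ← mul_lt_mul_iff_left₀ hr0]
    have e1 : r ^ (p - 1) = r ^ (p - 2) * r := by rw [← pow_succ]; congr 1; omega
    have hB' : r < ((p:ℝ) - 1) * ((1 - r ^ 2) * arctanh r) := by
      have heq : ((p:ℝ) - 1) * hfun r = ((p:ℝ) - 1) * ((1 - r ^ 2) * arctanh r) / r := by
        unfold hfun; ring
      rw [heq, lt_div_iff₀ hr0, one_mul] at hgt
      exact hgt
    have e2 : β * ↑p * (((p:ℝ) - 1) * r ^ (p - 2)) * (1 - r ^ 2) * r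
        = ((p:ℝ) - 1) * ((1 - r ^ 2) * arctanh r) := by
      rw [← hcrit, e1]; ring
    nlinarith [e2, hB']
  exact not_isLocalMax_of_second_deriv_pos hd h0 h2 hq hloc

lemma crit_localmin_ineq (β : ℝ) (p : ℕ) (hp : 3 ≤ p) {s : ℝ} (hs0 : 0 < s) (hs1 : s < 1)
    (hβ : 0 < β)
    (hcrit : β * p * s ^ (p - 1) = arctanh s) (hloc : IsLocalMin (bahH β p) s) :
    1 ≤ ((p : ℝ) - 1) * hfun s := by
  by_contra hlt
  push_neg at hlt
  have hsq : 0 < 1 - s ^ 2 := by nlinarith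
  have hd : ∀ᶠ x in 𝓝 s, HasDerivAt (bahH β p)
      ((fun y => β * p * y ^ (p - 1) - arctanh y) x) x :=
    eventually_of_mem (Ioo_mem_nhds (by linarith) hs1)
      (fun x hx => hasDerivAt_bahH β p hx.1 hx.2)
  have h0 : β * p * s ^ (p - 1) - arctanh s = 0 := by rw [hcrit]; ring
  have h2 := hasDerivAt_psi' β p hp (by linarith : (-1:ℝ) < s) hs1
  have hq : β * p * ((p - 1 : ℕ) * s ^ (p - 2)) - 1 / (1 - s ^ 2) < 0 := by
    have hk : ((p - 1 : ℕ) : ℝ) = (p : ℝ) - 1 := by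
      push_cast [Nat.cast_sub (by omega : 1 ≤ p)]; ring
    rw [hk, sub_neg, lt_div_iff₀ hsq, ← mul_lt_mul_iff_left₀ hs0]
    have e1 : s ^ (p - 1) = s ^ (p - 2) * s := by rw [← pow_succ]; congr 1; omega
    have hB' : ((p:ℝ) - 1) * ((1 - s ^ 2) * arctanh s) < s := by
      have heq : ((p:ℝ) - 1) * hfun s = ((p:ℝ) - 1) * ((1 - s ^ 2) * arctanh s) / s := by
        unfold hfun; ring
      rw [heq, div_lt_iff₀ hs0, one_mul] at hlt
      exact hlt
    have e2 : β * ↑p * (((p:ℝ) - 1) * s ^ (p - 2)) * (1 - s ^ 2) * s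
        = ((p:ℝ) - 1) * ((1 - s ^ 2) * arctanh s) := by
      rw [← hcrit, e1]; ring
    nlinarith [e2, hB']
  exact not_isLocalMin_of_second_deriv_neg hd h0 h2 hq hloc

lemma key_neg (p : ℕ) (hp : 3 ≤ p) (β m : ℝ) (hβ : 0 < β)
    (hm0 : 0 < m) (hm1 : m ≤ 1)
    (hmax : IsMaxOn (bahH β p) (Set.Icc (-1:ℝ) 1) m)
    {t : ℝ} (ht0 : 0 < t) (htm : t < m)
    (hη : β * p * t ^ (p - 1) < arctanh t) :
    bahH β p t ≤ 0 := by
  by_contra hpos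
  push_neg at hpos
  have ht1 : t < 1 := lt_of_lt_of_le htm hm1
  have hdt : HasDerivAt (bahH β p) (β * p * t ^ (p - 1) - arctanh t) t :=
    hasDerivAt_bahH β p (by linarith) ht1
  obtain ⟨t', ht'0, ht't, ht'gt⟩ := exists_left_gt hdt (by linarith) (ht0 : (0:ℝ) < t)
  -- max of bahH β p on [0, t]
  obtain ⟨r, hrmem, hrmax⟩ := (isCompact_Icc : IsCompact (Icc (0:ℝ) t)).exists_isMaxOn
    (nonempty_Icc.2 ht0.le) (continuous_bahH β p).continuousOn
  have hψ0 : bahH β p 0 = 0 := bahH_zero β p (by omega)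
  have hrt' : bahH β p t' ≤ bahH β p r := hrmax ⟨ht'0.le, ht't.le⟩
  have hψrpos : 0 < bahH β p r := lt_of_lt_of_le (lt_trans hpos ht'gt) hrt'
  have hr0 : 0 < r := by
    rcases eq_or_lt_of_le hrmem.1 with rfl | h
    · rw [hψ0] at hψrpos; linarith
    · exact h
  have hrt : r < t := by
    rcases eq_or_lt_of_le hrmem.2 with rfl | h
    · linarith [lt_of_lt_of_le ht'gt hrt']
    · exact h
  have hrloc : IsLocalMax (bahH β p) r :=
    hrmax.isLocalMax (Icc_mem_nhds hr0 hrt)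
  -- min of bahH β p on [r, m]
  obtain ⟨s, hsmem, hsmin⟩ := (isCompact_Icc : IsCompact (Icc r m)).exists_isMinOn
    (nonempty_Icc.2 (by linarith)) (continuous_bahH β p).continuousOn
  have hst : bahH β p s ≤ bahH β p t := hsmin ⟨by linarith, by linarith⟩
  have hs0 : r < s := by
    rcases eq_or_lt_of_le hsmem.1 with rfl | h
    · linarith [lt_of_lt_of_le ht'gt hrt']
    · exact h
  have hψm : bahH β p r ≤ bahH β p m := hmax ⟨by linarith, by linarith⟩
  have hsm : s < m := by
    rcases eq_or_lt_of_le hsmem.2 with rfl | h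
    · linarith
    · exact h
  have hsloc : IsLocalMin (bahH β p) s :=
    hsmin.isLocalMin (Icc_mem_nhds hs0 hsm)
  -- critical equations
  have hr1 : r < 1 := by linarith
  have hs1 : s < 1 := by linarith
  have hdr := hasDerivAt_bahH β p (by linarith : (-1:ℝ) < r) hr1
  have hds := hasDerivAt_bahH β p (by linarith : (-1:ℝ) < s) hs1
  have hcr : β * p * r ^ (p - 1) = arctanh r := by
    have := hrloc.deriv_eq_zero
    rw [hdr.deriv] at this
    linarith
  have hcs : β * p * s ^ (p - 1) = arctanh s := by
    have := hsloc.deriv_eq_zero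
    rw [hds.deriv] at this
    linarith
  have hmaxineq := crit_localmax_ineq β p hp hr0 hr1 hβ hcr hrloc
  have hminineq := crit_localmin_ineq β p hp (by linarith : 0 < s) hs1 hβ hcs hsloc
  have hanti := hfun_strictAntiOn ⟨hr0, hr1⟩ ⟨by linarith, hs1⟩ hs0
  have hk : (0:ℝ) < (p:ℝ) - 1 := by
    have : (3:ℝ) ≤ p := by exact_mod_cast hp
    linarith
  nlinarith [hanti, hmaxineq, hminineq, hk]

lemma m_lt_one (p : ℕ) (hp : 3 ≤ p) {β m : ℝ} (hβ : 0 < β) (hm0 : 0 < m) (hm1 : m ≤ 1)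
    (hmax : IsMaxOn (bahH β p) (Set.Icc (-1:ℝ) 1) m) : m < 1 := by
  by_contra h
  push_neg at h
  have hm : m = 1 := le_antisymm hm1 h
  set K : ℝ := 2 * (p * β) + 1 with hK
  have hKpos : 0 < K := by positivity
  have hexp : 1 < Real.exp K := by
    have := Real.add_one_le_exp K
    linarith
  set x₀ : ℝ := (Real.exp K - 1) / (Real.exp K + 1) with hx₀
  have hden : 0 < Real.exp K + 1 := by positivity
  have hx0pos : 0 < x₀ := div_pos (by linarith) hden
  have hx0lt : x₀ < 1 := by
    rw [div_lt_one hden]; linarith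
  have harc : arctanh x₀ = K / 2 := by
    unfold arctanh
    have e1 : 1 + x₀ = 2 * Real.exp K / (Real.exp K + 1) := by
      rw [hx₀]; field_simp; ring
    have e2 : 1 - x₀ = 2 / (Real.exp K + 1) := by
      rw [hx₀]; field_simp; ring
    rw [e1, e2]
    rw [show 2 * Real.exp K / (Real.exp K + 1) / (2 / (Real.exp K + 1)) = Real.exp K by
      field_simp]
    rw [Real.log_exp]
  have hanti : StrictAntiOn (bahH β p) (Icc x₀ 1) := by
    apply strictAntiOn_of_deriv_neg (convex_Icc _ _)
    · exact (continuous_bahH β p).continuousOn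
    · intro x hx
      rw [interior_Icc] at hx
      have hx1 : -1 < x := by linarith [hx.1]
      rw [(hasDerivAt_bahH β p hx1 hx.2).deriv]
      have hmono := arctanh_strictMonoOn (⟨by linarith, hx0lt⟩ : x₀ ∈ Ioo (-1:ℝ) 1)
        (⟨hx1, hx.2⟩ : x ∈ Ioo (-1:ℝ) 1) hx.1
      have hpow : x ^ (p - 1) ≤ 1 := pow_le_one₀ (by linarith [hx.1]) hx.2.le
      have hb : (0:ℝ) ≤ β * p := by positivity
      have : β * p * x ^ (p - 1) ≤ β * p := by
        have := mul_le_mul_of_nonneg_left hpow hb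
        linarith [this]
      rw [harc] at hmono
      have : K / 2 = p * β + 1 / 2 := by rw [hK]; ring
      nlinarith
  have hlt : bahH β p 1 < bahH β p x₀ :=
    hanti (left_mem_Icc.2 hx0lt.le) (right_mem_Icc.2 hx0lt.le) hx0lt
  have := hmax (⟨by linarith, hx0lt.le⟩ : x₀ ∈ Icc (-1:ℝ) 1)
  rw [hm] at this
  exact absurd this (not_le.2 hlt)

lemma bddAbove_bahH (β₀ : ℝ) (p : ℕ) {s : Set ℝ} (hs : s ⊆ Icc (-1:ℝ) 1) :
    BddAbove (bahH β₀ p '' s) :=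
  ((isCompact_Icc.image (continuous_bahH β₀ p)).bddAbove).mono (image_mono hs)

lemma csSup_Ioc_ge (β₀ : ℝ) (p : ℕ) {m : ℝ} (hm1 : m < 1)
    (hbdd : BddAbove (bahH β₀ p '' Ioc m 1)) :
    bahH β₀ p m ≤ sSup (bahH β₀ p '' Ioc m 1) := by
  by_contra h
  push_neg at h
  have hc : ContinuousAt (bahH β₀ p) m := (continuous_bahH β₀ p).continuousAt
  have hev : ∀ᶠ x in 𝓝 m, sSup (bahH β₀ p '' Ioc m 1) < bahH β₀ p x :=
    hc.eventually (eventually_gt_nhds h)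
  have hmem : Ioc m 1 ∈ 𝓝[>] m := Ioc_mem_nhdsGT_of_mem ⟨le_refl m, hm1⟩
  obtain ⟨x, hx1, hx2⟩ := ((hev.filter_mono nhdsWithin_le_nhds).and
    (eventually_of_mem hmem fun x hx => hx)).exists
  exact absurd (le_csSup hbdd (mem_image_of_mem _ hx2)) (not_le.2 hx1)

lemma csSup_T_nonneg (β₀ : ℝ) (p : ℕ) (hp : 3 ≤ p) {β : ℝ} (hβ : 0 < β)
    (hbdd : BddAbove (bahH β₀ p '' {t ∈ Set.Icc (-1:ℝ) 1 | β < etaFn p t})) :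
    0 ≤ sSup (bahH β₀ p '' {t ∈ Set.Icc (-1:ℝ) 1 | β < etaFn p t}) := by
  by_contra h
  push_neg at h
  have h0 : sSup (bahH β₀ p '' {t ∈ Set.Icc (-1:ℝ) 1 | β < etaFn p t}) < bahH β₀ p 0 := by
    rw [bahH_zero β₀ p (by omega)]; exact h
  have hev : ∀ᶠ x in 𝓝 (0:ℝ),
      sSup (bahH β₀ p '' {t ∈ Set.Icc (-1:ℝ) 1 | β < etaFn p t}) < bahH β₀ p x :=
    (continuous_bahH β₀ p).continuousAt.eventually (eventually_gt_nhds h0)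
  have hδpos : (0:ℝ) < min (1 / (β * p + 1)) 1 := by
    apply lt_min _ one_pos
    positivity
  have hmem : Ioo (0:ℝ) (min (1 / (β * p + 1)) 1) ∈ 𝓝[>] (0:ℝ) :=
    Ioo_mem_nhdsGT_of_mem ⟨le_refl 0, hδpos⟩
  obtain ⟨x, hx1, hx2⟩ := ((hev.filter_mono nhdsWithin_le_nhds).and
    (eventually_of_mem hmem fun x hx => hx)).exists
  have hxT : x ∈ {t ∈ Set.Icc (-1:ℝ) 1 | β < etaFn p t} := by
    refine ⟨⟨by linarith [hx2.1], ?_⟩, ?_⟩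
    · have := hx2.2; have h2 := min_le_right (1 / (β * p + 1)) 1; linarith
    · exact eta_gt_of_small hp hβ hx2.1 (lt_of_lt_of_le hx2.2 (min_le_left _ _))
  exact absurd (le_csSup hbdd (mem_image_of_mem _ hxT)) (not_le.2 hx1)

lemma case1 (p : ℕ) (hp : 3 ≤ p) (β β₀ m : ℝ) (hβpos : 0 < β) (hm0 : 0 < m) (hmlt : m < 1)
    (hmax : IsMaxOn (bahH β p) (Set.Icc (-1:ℝ) 1) m)
    (hβ₀c : β₀ < bahI m / m ^ p) (hcβ : bahI m / m ^ p ≤ β) :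
    sSup (bahH β₀ p '' Ioc m 1)
      < sSup (bahH β₀ p '' {t ∈ Set.Icc (-1:ℝ) 1 | β < etaFn p t}) := by
  have hmp : 0 < m ^ p := pow_pos hm0 p
  have hβ₀β : β₀ ≤ β := le_trans hβ₀c.le hcβ
  have hbdd2 : BddAbove (bahH β₀ p '' {t ∈ Set.Icc (-1:ℝ) 1 | β < etaFn p t}) :=
    bddAbove_bahH β₀ p (fun t ht => ht.1)
  have hS2 : 0 ≤ sSup (bahH β₀ p '' {t ∈ Set.Icc (-1:ℝ) 1 | β < etaFn p t}) :=
    csSup_T_nonneg β₀ p hp hβpos hbdd2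
  have hub : ∀ y ∈ bahH β₀ p '' Ioc m 1, y ≤ bahH β₀ p m := by
    rintro y ⟨x, hx, rfl⟩
    have h1 : bahH β p x ≤ bahH β p m := hmax ⟨by linarith [hx.1], hx.2⟩
    have h2 : m ^ p ≤ x ^ p := pow_le_pow_left₀ hm0.le hx.1.le p
    simp only [bahH] at h1 ⊢
    nlinarith [mul_nonneg (sub_nonneg.2 hβ₀β) (sub_nonneg.2 h2)]
  have hne : (bahH β₀ p '' Ioc m 1).Nonempty :=
    ⟨_, mem_image_of_mem _ (⟨(by linarith : m < (m+1)/2), by linarith⟩ : (m+1)/2 ∈ Ioc m 1)⟩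
  have hS1 : sSup (bahH β₀ p '' Ioc m 1) ≤ bahH β₀ p m := csSup_le hne hub
  have hneg : bahH β₀ p m < 0 := by
    have := (lt_div_iff₀ hmp).1 hβ₀c
    simp only [bahH]; linarith
  linarith

lemma case2 (p : ℕ) (hp : 3 ≤ p) (β β₀ m : ℝ) (hβpos : 0 < β) (hm0 : 0 < m) (hmlt : m < 1)
    (hmax : IsMaxOn (bahH β p) (Set.Icc (-1:ℝ) 1) m)
    (hβ₀c : bahI m / m ^ p ≤ β₀)
    (hTne : ({t ∈ Set.Icc (-1:ℝ) 1 | β < etaFn p t}).Nonempty) :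
    sSup (bahH β₀ p '' {t ∈ Set.Icc (-1:ℝ) 1 | β < etaFn p t})
      ≤ sSup (bahH β₀ p '' Ioc m 1) := by
  have hmp : 0 < m ^ p := pow_pos hm0 p
  have hbdd1 : BddAbove (bahH β₀ p '' Ioc m 1) :=
    bddAbove_bahH β₀ p (fun x hx => ⟨by linarith [hx.1], hx.2⟩)
  have hS1m : bahH β₀ p m ≤ sSup (bahH β₀ p '' Ioc m 1) := csSup_Ioc_ge β₀ p hmlt hbdd1
  have hHm0 : 0 ≤ bahH β₀ p m := by
    have := (div_le_iff₀ hmp).1 hβ₀c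
    simp only [bahH]; linarith
  have hposcase : ∀ u, 0 < u → u ≤ 1 → β < etaFn p u →
      bahH β₀ p u ≤ sSup (bahH β₀ p '' Ioc m 1) := by
    intro u hu0 hu1 huη
    by_cases hum : m < u
    · exact le_csSup hbdd1 (mem_image_of_mem _ ⟨hum, hu1⟩)
    push_neg at hum
    rcases eq_or_lt_of_le hum with heq | hultm
    · rw [heq]; exact hS1m
    rcases le_or_gt β₀ β with hle | hgt
    · have hηd : β * p * u ^ (p - 1) < arctanh u := (eta_gt_iff (by omega) hu0).1 huη
      have hkey : bahH β p u ≤ 0 := key_neg p hp β m hβpos hm0 hmlt.le hmax hu0 hultm hηd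
      have hcmp : bahH β₀ p u ≤ bahH β p u := by
        simp only [bahH]
        have := mul_le_mul_of_nonneg_right hle (pow_pos hu0 p).le
        linarith
      linarith
    · have h1 : bahH β p u ≤ bahH β p m := hmax ⟨by linarith, hu1⟩
      have h2 : u ^ p ≤ m ^ p := pow_le_pow_left₀ hu0.le hultm.le p
      have hcmp : bahH β₀ p u ≤ bahH β₀ p m := by
        simp only [bahH] at h1 ⊢
        nlinarith [mul_nonneg (sub_nonneg.2 hgt.le) (sub_nonneg.2 h2)]
      linarith
  have hub : ∀ y ∈ bahH β₀ p '' {t ∈ Set.Icc (-1:ℝ) 1 | β < etaFn p t},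
      y ≤ sSup (bahH β₀ p '' Ioc m 1) := by
    rintro y ⟨t, ⟨⟨ht1, ht2⟩, htη⟩, rfl⟩
    rcases lt_trichotomy t 0 with hneg | rfl | hpos
    · rcases Nat.even_or_odd p with hev | hodd
      · have htne : t ≠ -1 := by
          rintro rfl
          rw [eta_at_neg_one] at htη; linarith
        have h1t : -1 < t := lt_of_le_of_ne ht1 (Ne.symm htne)
        have hη' : β < etaFn p (-t) := by rw [eta_neg_even (by omega) hev]; exact htη
        have hres := hposcase (-t) (by linarith) (by linarith) hη'
        rw [bahH_neg_even hev] at hres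
        exact hres
      · exfalso
        have := eta_nonpos_of_odd hodd ht1 hneg
        linarith
    · rw [eta_at_zero] at htη; linarith
    · exact hposcase t hpos ht2 htη
  exact csSup_le (hTne.image _) hub

/-- For `p ≥ 3` and a fixed `β > β*(p)` with positive global maximizer `m = m_*(β,p)` of
`H_{β,p}` on `[−1,1]`: the set of `β₀ > β*(p)` for which
`sup_{x ∈ η_p⁻¹((β,∞))} H_{β₀,p}(x) > sup_{x ∈ (m, 1]} H_{β₀,p}(x)` is exactly the open
interval `(β*(p), I(m)/mᵖ)`. -/
theorem statement11 (p : ℕ) (hp : 3 ≤ p) (β : ℝ) (hβ : betaStar p < β)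
    (m : ℝ) (hm0 : 0 < m) (hm1 : m ∈ Set.Icc (-1 : ℝ) 1)
    (hmax : IsMaxOn (bahH β p) (Set.Icc (-1 : ℝ) 1) m) :
    {β₀ : ℝ | betaStar p < β₀ ∧
        sSup (bahH β₀ p '' Set.Ioc m 1)
          < sSup (bahH β₀ p '' {t ∈ Set.Icc (-1 : ℝ) 1 | β < etaFn p t})}
      = Set.Ioo (betaStar p) (bahI m / m ^ p) := by
  have hp1 : 1 ≤ p := by omega
  have hβs : 0 ≤ betaStar p := Real.sSup_nonneg (fun x hx => hx.1)
  have hβpos : 0 < β := lt_of_le_of_lt hβs hβ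
  have hmlt : m < 1 := m_lt_one p hp hβpos hm0 hm1.2 hmax
  have hmp : 0 < m ^ p := pow_pos hm0 p
  have hIm : bahI m ≤ β * m ^ p := by
    have h0 : bahH β p 0 ≤ bahH β p m :=
      hmax (⟨by norm_num, by norm_num⟩ : (0:ℝ) ∈ Set.Icc (-1:ℝ) 1)
    rw [bahH_zero β p hp1] at h0
    simp only [bahH] at h0
    linarith
  have hcβ : bahI m / m ^ p ≤ β := by rw [div_le_iff₀ hmp]; linarith
  have hδpos : (0:ℝ) < min (1 / (β * ↑p + 1)) 1 := lt_min (by positivity) one_pos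
  have hδ1 : min (1 / (β * ↑p + 1)) 1 ≤ 1 := min_le_right _ _
  have hδ2 : min (1 / (β * ↑p + 1)) 1 ≤ 1 / (β * ↑p + 1) := min_le_left _ _
  have hTne : ({t ∈ Set.Icc (-1:ℝ) 1 | β < etaFn p t}).Nonempty := by
    refine ⟨min (1 / (β * ↑p + 1)) 1 / 2, ⟨⟨by linarith, by linarith⟩, ?_⟩⟩
    exact eta_gt_of_small hp hβpos (by linarith) (by linarith)
  ext β₀
  simp only [Set.mem_setOf_eq, Set.mem_Ioo]
  constructor
  · rintro ⟨h1, h2⟩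
    refine ⟨h1, ?_⟩
    by_contra hge
    push_neg at hge
    exact absurd h2 (not_lt.2 (case2 p hp β β₀ m hβpos hm0 hmlt hmax hge hTne))
  · rintro ⟨h1, h2⟩
    exact ⟨h1, case1 p hp β β₀ m hβpos hm0 hmlt hmax h2 hcβ⟩
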